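/- Let A be a Hopf algebra over a field k and let Φ : A → k be an algebra homomorphism (a character) such that S ∘ S = Φ^{-1} * id_A * Φ in the convolution algebra of linear maps A → A, where Φ^{-1} = Φ ∘ S is the convolution inverse of Φ. Then the antipode S of A is bijective, and Φ is a sovereign character on A, i.e. S^{-1} = Φ * S * Φ^{-1}. -/

import Mathlib

/-!
STATEMENT 0: Let `A` be a Hopf algebra over a field `k` and let `Φ : A → k` be an algebra
homomorphism (a character) such that `S ∘ S = Φ⁻¹ * id_A * Φ` in the convolution algebra of
linear maps `A → A`, where `Φ⁻¹ = Φ ∘ S` is the convolution inverse of `Φ`. Then the antipode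
`S` of `A` is bijective, and `Φ` is a sovereign character on `A`, i.e. `S⁻¹ = Φ * S * Φ⁻¹`.
-/

open TensorProduct

/-- The convolution product of two linear maps from a Hopf algebra to itself:
`f * g = m ∘ (f ⊗ g) ∘ Δ`. -/
noncomputable def conv {k A : Type*} [CommSemiring k] [Semiring A] [HopfAlgebra k A]
    (f g : A →ₗ[k] A) : A →ₗ[k] A :=
  (LinearMap.mul' k A) ∘ₗ (TensorProduct.map f g) ∘ₗ Coalgebra.comul

/-- A character `Φ : A → k`, viewed as a linear map `A → A` via the unit of `A`. -/
noncomputable def charToEnd {k A : Type*} [CommSemiring k] [Semiring A] [HopfAlgebra k A]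
    (Φ : A →ₐ[k] k) : A →ₗ[k] A :=
  (Algebra.linearMap k A) ∘ₗ Φ.toLinearMap

section Aux

variable {k A : Type*} [CommSemiring k] [Semiring A] [HopfAlgebra k A]

lemma conv_repr {ι : Type*} (f g : A →ₗ[k] A) {a : A} (r : Coalgebra.Repr k a ι) :
    conv f g a = ∑ i ∈ r.index, f (r.left i) * g (r.right i) := by
  simp only [conv, LinearMap.comp_apply]
  rw [← r.eq]
  simp [map_sum]

lemma conv_assoc (f g h : A →ₗ[k] A) : conv (conv f g) h = conv f (conv g h) := by
  ext a
  set r := Coalgebra.Repr.arbitrary k a with hr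
  have key := Coalgebra.sum_map_tmul_tmul_eq f g h a (repr := r)
    (a₁ := fun i => Coalgebra.Repr.arbitrary k (r.left i))
    (a₂ := fun i => Coalgebra.Repr.arbitrary k (r.right i))
  have key2 := congrArg (LinearMap.mul' k A ∘ₗ LinearMap.lTensor A (LinearMap.mul' k A)) key
  simp only [map_sum, LinearMap.comp_apply, LinearMap.lTensor_tmul, LinearMap.mul'_apply] at key2
  rw [conv_repr _ _ r, conv_repr _ _ r]
  calc ∑ i ∈ r.index, conv f g (r.left i) * h (r.right i)
      = ∑ i ∈ r.index, ∑ j ∈ (Coalgebra.Repr.arbitrary k (r.left i)).index,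
          f ((Coalgebra.Repr.arbitrary k (r.left i)).left j) *
            ((Coalgebra.Repr.arbitrary k (r.left i)).right j
              |> g) * h (r.right i) := by
        refine Finset.sum_congr rfl fun i _ => ?_
        rw [conv_repr f g (Coalgebra.Repr.arbitrary k (r.left i)), Finset.sum_mul]
    _ = ∑ i ∈ r.index, f (r.left i) * conv g h (r.right i) := by
        simp only [mul_assoc]
        rw [← key2]
        refine Finset.sum_congr rfl fun i _ => ?_
        rw [conv_repr g h (Coalgebra.Repr.arbitrary k (r.right i)), Finset.mul_sum]

lemma conv_counit_left (f : A →ₗ[k] A) :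
    conv ((Algebra.linearMap k A) ∘ₗ (Coalgebra.counit : A →ₗ[k] k)) f = f := by
  ext a
  rw [conv_repr _ _ (Coalgebra.Repr.arbitrary k a)]
  have h := Coalgebra.sum_counit_tmul_eq (R := k) (Coalgebra.Repr.arbitrary k a)
  apply_fun (TensorProduct.lid k A) at h
  simp only [map_sum, TensorProduct.lid_tmul, one_smul] at h
  calc ∑ i ∈ (Coalgebra.Repr.arbitrary k a).index,
        ((Algebra.linearMap k A) ∘ₗ (Coalgebra.counit : A →ₗ[k] k))
          ((Coalgebra.Repr.arbitrary k a).left i) * f ((Coalgebra.Repr.arbitrary k a).right i)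
      = f (∑ i ∈ (Coalgebra.Repr.arbitrary k a).index,
          Coalgebra.counit (R := k) ((Coalgebra.Repr.arbitrary k a).left i) •
            (Coalgebra.Repr.arbitrary k a).right i) := by
        rw [map_sum]
        refine Finset.sum_congr rfl fun i _ => ?_
        rw [LinearMap.comp_apply, Algebra.linearMap_apply, map_smul, Algebra.smul_def]
    _ = f a := by rw [h]

lemma conv_counit_right (f : A →ₗ[k] A) :
    conv f ((Algebra.linearMap k A) ∘ₗ (Coalgebra.counit : A →ₗ[k] k)) = f := by
  ext a
  rw [conv_repr _ _ (Coalgebra.Repr.arbitrary k a)]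
  have h := Coalgebra.sum_tmul_counit_eq (R := k) (Coalgebra.Repr.arbitrary k a)
  apply_fun (TensorProduct.rid k A) at h
  simp only [map_sum, TensorProduct.rid_tmul, one_smul] at h
  calc ∑ i ∈ (Coalgebra.Repr.arbitrary k a).index,
        f ((Coalgebra.Repr.arbitrary k a).left i) *
          ((Algebra.linearMap k A) ∘ₗ (Coalgebra.counit : A →ₗ[k] k))
            ((Coalgebra.Repr.arbitrary k a).right i)
      = f (∑ i ∈ (Coalgebra.Repr.arbitrary k a).index,
          Coalgebra.counit (R := k) ((Coalgebra.Repr.arbitrary k a).right i) •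
            (Coalgebra.Repr.arbitrary k a).left i) := by
        rw [map_sum]
        refine Finset.sum_congr rfl fun i _ => ?_
        rw [LinearMap.comp_apply, Algebra.linearMap_apply, ← Algebra.commutes,
          ← Algebra.smul_def, map_smul]
    _ = f a := by rw [h]

lemma conv_scalar_left (ψ : A →ₗ[k] k) (f : A →ₗ[k] A) :
    conv ((Algebra.linearMap k A) ∘ₗ ψ) f =
      f ∘ₗ conv ((Algebra.linearMap k A) ∘ₗ ψ) LinearMap.id := by
  ext a
  rw [LinearMap.comp_apply, conv_repr _ _ (Coalgebra.Repr.arbitrary k a),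
    conv_repr _ _ (Coalgebra.Repr.arbitrary k a), map_sum]
  refine Finset.sum_congr rfl fun i _ => ?_
  simp [← Algebra.smul_def]

lemma conv_scalar_right (ψ : A →ₗ[k] k) (f : A →ₗ[k] A) :
    conv f ((Algebra.linearMap k A) ∘ₗ ψ) =
      f ∘ₗ conv LinearMap.id ((Algebra.linearMap k A) ∘ₗ ψ) := by
  ext a
  rw [LinearMap.comp_apply, conv_repr _ _ (Coalgebra.Repr.arbitrary k a),
    conv_repr _ _ (Coalgebra.Repr.arbitrary k a), map_sum]
  refine Finset.sum_congr rfl fun i _ => ?_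
  simp only [LinearMap.comp_apply, Algebra.linearMap_apply, LinearMap.id_coe, id_eq,
    ← Algebra.commutes, ← Algebra.smul_def, map_smul]

lemma conv_char_inv (Φ : A →ₐ[k] k) :
    conv (charToEnd Φ) (charToEnd Φ ∘ₗ HopfAlgebra.antipode (R := k)) =
      (Algebra.linearMap k A) ∘ₗ (Coalgebra.counit : A →ₗ[k] k) := by
  ext a
  rw [conv_repr _ _ (Coalgebra.Repr.arbitrary k a)]
  have h := HopfAlgebra.sum_mul_antipode_eq_algebraMap_counit (R := k) (Coalgebra.Repr.arbitrary k a)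
  calc ∑ i ∈ (Coalgebra.Repr.arbitrary k a).index,
        charToEnd Φ ((Coalgebra.Repr.arbitrary k a).left i) *
          (charToEnd Φ ∘ₗ HopfAlgebra.antipode (R := k))
            ((Coalgebra.Repr.arbitrary k a).right i)
      = algebraMap k A (Φ (∑ i ∈ (Coalgebra.Repr.arbitrary k a).index,
          (Coalgebra.Repr.arbitrary k a).left i *
            HopfAlgebra.antipode (R := k) ((Coalgebra.Repr.arbitrary k a).right i))) := by
        rw [map_sum, map_sum]
        refine Finset.sum_congr rfl fun i _ => ?_
        simp [charToEnd]
    _ = (Algebra.linearMap k A ∘ₗ (Coalgebra.counit : A →ₗ[k] k)) a := by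
        rw [h]
        simp

lemma conv_inv_char (Φ : A →ₐ[k] k) :
    conv (charToEnd Φ ∘ₗ HopfAlgebra.antipode (R := k)) (charToEnd Φ) =
      (Algebra.linearMap k A) ∘ₗ (Coalgebra.counit : A →ₗ[k] k) := by
  ext a
  rw [conv_repr _ _ (Coalgebra.Repr.arbitrary k a)]
  have h := HopfAlgebra.sum_antipode_mul_eq_algebraMap_counit (R := k) (Coalgebra.Repr.arbitrary k a)
  calc ∑ i ∈ (Coalgebra.Repr.arbitrary k a).index,
        (charToEnd Φ ∘ₗ HopfAlgebra.antipode (R := k))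
            ((Coalgebra.Repr.arbitrary k a).left i) *
          charToEnd Φ ((Coalgebra.Repr.arbitrary k a).right i)
      = algebraMap k A (Φ (∑ i ∈ (Coalgebra.Repr.arbitrary k a).index,
          HopfAlgebra.antipode (R := k) ((Coalgebra.Repr.arbitrary k a).left i) *
            (Coalgebra.Repr.arbitrary k a).right i)) := by
        rw [map_sum, map_sum]
        refine Finset.sum_congr rfl fun i _ => ?_
        simp [charToEnd]
    _ = (Algebra.linearMap k A ∘ₗ (Coalgebra.counit : A →ₗ[k] k)) a := by
        rw [h]
        simp

end Aux

theorem antipode_bijective_and_sovereign_of_S_sq_eq_conv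
    {k A : Type*} [Field k] [Ring A] [HopfAlgebra k A] (Φ : A →ₐ[k] k)
    -- `Φ⁻¹ = Φ ∘ S`, the convolution inverse of the character `Φ`,
    -- viewed as a linear map `A → A`:
    (Φinv : A →ₗ[k] A)
    (hΦinv : Φinv = charToEnd Φ ∘ₗ HopfAlgebra.antipode (R := k))
    -- hypothesis: `S ∘ S = Φ⁻¹ * id * Φ` in the convolution algebra:
    (hS : HopfAlgebra.antipode (R := k) (A := A) ∘ₗ HopfAlgebra.antipode (R := k) =
      conv Φinv (conv LinearMap.id (charToEnd Φ))) :
    -- conclusion: `S` is bijective and `S⁻¹ = Φ * S * Φ⁻¹`: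
    Function.Bijective (HopfAlgebra.antipode (R := k) (A := A)) ∧
    conv (charToEnd Φ) (conv (HopfAlgebra.antipode (R := k)) Φinv) ∘ₗ
        HopfAlgebra.antipode (R := k) = LinearMap.id ∧
    HopfAlgebra.antipode (R := k) ∘ₗ
        conv (charToEnd Φ) (conv (HopfAlgebra.antipode (R := k)) Φinv) = LinearMap.id := by
  subst hΦinv
  set S : A →ₗ[k] A := HopfAlgebra.antipode (R := k) with hSdef
  set u : A →ₗ[k] A := charToEnd Φ with hudef
  have hu : u = Algebra.linearMap k A ∘ₗ Φ.toLinearMap := by rw [hudef]; rfl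
  have hv : u ∘ₗ S = Algebra.linearMap k A ∘ₗ (Φ.toLinearMap ∘ₗ S) := by rw [hu]; rfl
  have sLu : ∀ f : A →ₗ[k] A, conv u f = f ∘ₗ conv u LinearMap.id := by
    intro f; rw [hu]; exact conv_scalar_left _ f
  have sRu : ∀ f : A →ₗ[k] A, conv f u = f ∘ₗ conv LinearMap.id u := by
    intro f; rw [hu]; exact conv_scalar_right _ f
  have sLv : ∀ f : A →ₗ[k] A, conv (u ∘ₗ S) f = f ∘ₗ conv (u ∘ₗ S) LinearMap.id := by
    intro f; rw [hv]; exact conv_scalar_left _ f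
  have sRv : ∀ f : A →ₗ[k] A, conv f (u ∘ₗ S) = f ∘ₗ conv LinearMap.id (u ∘ₗ S) := by
    intro f; rw [hv]; exact conv_scalar_right _ f
  have huv : conv u (u ∘ₗ S) =
      Algebra.linearMap k A ∘ₗ (Coalgebra.counit : A →ₗ[k] k) := conv_char_inv Φ
  have hvu : conv (u ∘ₗ S) u =
      Algebra.linearMap k A ∘ₗ (Coalgebra.counit : A →ₗ[k] k) := conv_inv_char Φ
  have h1 : conv LinearMap.id u ∘ₗ conv LinearMap.id (u ∘ₗ S) = LinearMap.id := by
    rw [← sRv (conv LinearMap.id u), conv_assoc, huv, conv_counit_right]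
  have h2 : conv LinearMap.id (u ∘ₗ S) ∘ₗ conv LinearMap.id u = LinearMap.id := by
    rw [← sRu (conv LinearMap.id (u ∘ₗ S)), conv_assoc, hvu, conv_counit_right]
  have h3 : conv u LinearMap.id ∘ₗ conv (u ∘ₗ S) LinearMap.id = LinearMap.id := by
    rw [← sLv (conv u LinearMap.id), ← conv_assoc, hvu, conv_counit_left]
  have h4 : conv (u ∘ₗ S) LinearMap.id ∘ₗ conv u LinearMap.id = LinearMap.id := by
    rw [← sLu (conv (u ∘ₗ S) LinearMap.id), ← conv_assoc, huv, conv_counit_left]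
  have hcomm : conv (u ∘ₗ S) LinearMap.id ∘ₗ conv LinearMap.id (u ∘ₗ S)
      = conv LinearMap.id (u ∘ₗ S) ∘ₗ conv (u ∘ₗ S) LinearMap.id := by
    rw [← sRv (conv (u ∘ₗ S) LinearMap.id), ← sLv (conv LinearMap.id (u ∘ₗ S)), conv_assoc]
  have hT : conv u (conv S (u ∘ₗ S)) =
      (S ∘ₗ conv LinearMap.id (u ∘ₗ S)) ∘ₗ conv u LinearMap.id := by
    rw [sLu (conv S (u ∘ₗ S)), sRv S]
  have hSS : S ∘ₗ S = conv LinearMap.id u ∘ₗ conv (u ∘ₗ S) LinearMap.id := by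
    rw [hS]; exact sLv (conv LinearMap.id u)
  have hST : S ∘ₗ conv u (conv S (u ∘ₗ S)) = LinearMap.id := by
    rw [hT,
      show S ∘ₗ (S ∘ₗ conv LinearMap.id (u ∘ₗ S)) ∘ₗ conv u LinearMap.id
        = ((S ∘ₗ S) ∘ₗ conv LinearMap.id (u ∘ₗ S)) ∘ₗ conv u LinearMap.id from rfl,
      hSS,
      show ((conv LinearMap.id u ∘ₗ conv (u ∘ₗ S) LinearMap.id) ∘ₗ
            conv LinearMap.id (u ∘ₗ S)) ∘ₗ conv u LinearMap.id
        = conv LinearMap.id u ∘ₗ (conv (u ∘ₗ S) LinearMap.id ∘ₗ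
            conv LinearMap.id (u ∘ₗ S)) ∘ₗ conv u LinearMap.id from rfl,
      hcomm,
      show conv LinearMap.id u ∘ₗ (conv LinearMap.id (u ∘ₗ S) ∘ₗ
            conv (u ∘ₗ S) LinearMap.id) ∘ₗ conv u LinearMap.id
        = (conv LinearMap.id u ∘ₗ conv LinearMap.id (u ∘ₗ S)) ∘ₗ
            (conv (u ∘ₗ S) LinearMap.id ∘ₗ conv u LinearMap.id) from rfl,
      h1, h4, LinearMap.id_comp]
  have hP1 : (S ∘ₗ S) ∘ₗ (conv u LinearMap.id ∘ₗ conv LinearMap.id (u ∘ₗ S))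
      = LinearMap.id := by
    rw [hSS,
      show (conv LinearMap.id u ∘ₗ conv (u ∘ₗ S) LinearMap.id) ∘ₗ
            (conv u LinearMap.id ∘ₗ conv LinearMap.id (u ∘ₗ S))
        = conv LinearMap.id u ∘ₗ (conv (u ∘ₗ S) LinearMap.id ∘ₗ conv u LinearMap.id) ∘ₗ
            conv LinearMap.id (u ∘ₗ S) from rfl,
      h4, LinearMap.id_comp, h1]
  have hP2 : (conv u LinearMap.id ∘ₗ conv LinearMap.id (u ∘ₗ S)) ∘ₗ (S ∘ₗ S)
      = LinearMap.id := by
    rw [hSS,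
      show (conv u LinearMap.id ∘ₗ conv LinearMap.id (u ∘ₗ S)) ∘ₗ
            (conv LinearMap.id u ∘ₗ conv (u ∘ₗ S) LinearMap.id)
        = conv u LinearMap.id ∘ₗ (conv LinearMap.id (u ∘ₗ S) ∘ₗ conv LinearMap.id u) ∘ₗ
            conv (u ∘ₗ S) LinearMap.id from rfl,
      h2, LinearMap.id_comp, h3]
  have hSinj : Function.Injective S := by
    have h2inj : Function.Injective fun x => S (S x) := by
      intro x y hxy
      have hx := LinearMap.congr_fun hP2 x
      have hy := LinearMap.congr_fun hP2 y
      simp only [LinearMap.comp_apply, LinearMap.id_coe, id_eq] at hx hy hxy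
      rw [← hx, ← hy, hxy]
    intro a b hab
    exact h2inj (by simp only; exact congrArg S hab)
  have hSsurj : Function.Surjective S := by
    intro b
    have hb := LinearMap.congr_fun hP1 b
    simp only [LinearMap.comp_apply, LinearMap.id_coe, id_eq] at hb
    exact ⟨_, hb⟩
  have hTS : conv u (conv S (u ∘ₗ S)) ∘ₗ S = LinearMap.id := by
    apply LinearMap.ext; intro a
    apply hSinj
    have := LinearMap.congr_fun hST (S a)
    simpa only [LinearMap.comp_apply, LinearMap.id_coe, id_eq] using this
  exact ⟨⟨hSinj, hSsurj⟩, hTS, hST⟩
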